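/- Let S be a finite nonempty set, p : S → S → ℝ a stochastic matrix with all entries strictly positive, g : S → ℝ, and ζ₀ ∈ ℝ. Suppose ρ : ℝ → ℝ and V : ℝ → S → ℝ satisfy, for every ζ in an open interval around ζ₀: ρ(ζ) > 0, V(ζ) strictly positive, and ρ(ζ)·V(ζ)(i) = exp(ζ·g(i))·Σ_j p(i,j)·V(ζ)(j) for all i; suppose ρ and ζ ↦ V(ζ)(i) (for each i) are differentiable at ζ₀. Let u : S → ℝ be strictly positive with Σ_i u(i)·exp(ζ₀·g(i))·p(i,j) = ρ(ζ₀)·u(j) for all j. Then ρ'(ζ₀)/ρ(ζ₀) = Σ_i π*(i)·g(i), where π*(i) := u(i)·V(ζ₀)(i) / Σ_j u(j)·V(ζ₀)(j). -/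

import Mathlib

/-- Derivative identity for the Perron eigenvalue: if `(ρ ζ, V ζ)` solves the
multiplicative Poisson equation on an open interval around `ζ₀`, `ρ` and each
`ζ ↦ V ζ i` are differentiable at `ζ₀` with respective derivatives `ρ'` and
`V' i`, and `u` is a positive left eigenvector of `Q_{ζ₀}` with eigenvalue
`ρ ζ₀`, then `ρ'(ζ₀) / ρ(ζ₀) = ∑ i, π* i * g i` where
`π* i = u i * V ζ₀ i / ∑ j, u j * V ζ₀ j`. -/
theorem log_rho_derivative_eq_stationary_mean
    {S : Type*} [Fintype S] [Nonempty S]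
    (p : S → S → ℝ)
    (hp_pos : ∀ i j, 0 < p i j)
    (hp_row : ∀ i, ∑ j, p i j = 1)
    (g : S → ℝ) (ζ₀ : ℝ)
    (ρ : ℝ → ℝ) (V : ℝ → S → ℝ)
    (ε : ℝ) (hε : 0 < ε)
    (hρ : ∀ ζ ∈ Set.Ioo (ζ₀ - ε) (ζ₀ + ε), 0 < ρ ζ)
    (hV : ∀ ζ ∈ Set.Ioo (ζ₀ - ε) (ζ₀ + ε), ∀ i, 0 < V ζ i)
    (heq : ∀ ζ ∈ Set.Ioo (ζ₀ - ε) (ζ₀ + ε), ∀ i,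
      ρ ζ * V ζ i = Real.exp (ζ * g i) * ∑ j, p i j * V ζ j)
    (ρ' : ℝ) (hρ' : HasDerivAt ρ ρ' ζ₀)
    (V' : S → ℝ) (hV' : ∀ i, HasDerivAt (fun ζ => V ζ i) (V' i) ζ₀)
    (u : S → ℝ) (hu : ∀ i, 0 < u i)
    (hleft : ∀ j, ∑ i, u i * (Real.exp (ζ₀ * g i) * p i j) = ρ ζ₀ * u j) :
    ρ' / ρ ζ₀ = ∑ i, (u i * V ζ₀ i / ∑ j, u j * V ζ₀ j) * g i := by
  have hmem : ζ₀ ∈ Set.Ioo (ζ₀ - ε) (ζ₀ + ε) := ⟨by linarith, by linarith⟩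
  have hnhds : Set.Ioo (ζ₀ - ε) (ζ₀ + ε) ∈ nhds ζ₀ :=
    Ioo_mem_nhds hmem.1 hmem.2
  -- derivative of the eigen-equation at ζ₀, componentwise
  have key : ∀ i, ρ' * V ζ₀ i + ρ ζ₀ * V' i
      = g i * (ρ ζ₀ * V ζ₀ i) + Real.exp (ζ₀ * g i) * ∑ j, p i j * V' j := by
    intro i
    have hF : HasDerivAt (fun ζ => ρ ζ * V ζ i) (ρ' * V ζ₀ i + ρ ζ₀ * V' i) ζ₀ :=
      hρ'.mul (hV' i)
    have hExp : HasDerivAt (fun ζ => Real.exp (ζ * g i))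
        (Real.exp (ζ₀ * g i) * g i) ζ₀ :=
      (hasDerivAt_mul_const (g i)).exp
    have hSum : HasDerivAt (fun ζ => ∑ j, p i j * V ζ j) (∑ j, p i j * V' j) ζ₀ :=
      HasDerivAt.fun_sum fun j _ => (hV' j).const_mul (p i j)
    have hG : HasDerivAt (fun ζ => Real.exp (ζ * g i) * ∑ j, p i j * V ζ j)
        (Real.exp (ζ₀ * g i) * g i * (∑ j, p i j * V ζ₀ j)
          + Real.exp (ζ₀ * g i) * ∑ j, p i j * V' j) ζ₀ := hExp.mul hSum
    have hEq : (fun ζ => ρ ζ * V ζ i)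
        =ᶠ[nhds ζ₀] fun ζ => Real.exp (ζ * g i) * ∑ j, p i j * V ζ j :=
      Filter.eventually_of_mem hnhds fun ζ hζ => heq ζ hζ i
    have hF2 : HasDerivAt (fun ζ => ρ ζ * V ζ i)
        (Real.exp (ζ₀ * g i) * g i * (∑ j, p i j * V ζ₀ j)
          + Real.exp (ζ₀ * g i) * ∑ j, p i j * V' j) ζ₀ :=
      hG.congr_of_eventuallyEq hEq
    have hd := hF.unique hF2
    have h0 : Real.exp (ζ₀ * g i) * (∑ j, p i j * V ζ₀ j) = ρ ζ₀ * V ζ₀ i :=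
      (heq ζ₀ hmem i).symm
    calc ρ' * V ζ₀ i + ρ ζ₀ * V' i
        = Real.exp (ζ₀ * g i) * g i * (∑ j, p i j * V ζ₀ j)
          + Real.exp (ζ₀ * g i) * ∑ j, p i j * V' j := hd
      _ = g i * (Real.exp (ζ₀ * g i) * (∑ j, p i j * V ζ₀ j))
          + Real.exp (ζ₀ * g i) * ∑ j, p i j * V' j := by ring
      _ = g i * (ρ ζ₀ * V ζ₀ i) + Real.exp (ζ₀ * g i) * ∑ j, p i j * V' j := by
          rw [h0]
  -- multiply by u i and sum over i
  have hsum : ρ' * ∑ i, u i * V ζ₀ i + ρ ζ₀ * ∑ i, u i * V' i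
      = ρ ζ₀ * (∑ i, u i * V ζ₀ i * g i) + ρ ζ₀ * ∑ i, u i * V' i := by
    have h1 : ∑ i, u i * (ρ' * V ζ₀ i + ρ ζ₀ * V' i)
        = ∑ i, u i * (g i * (ρ ζ₀ * V ζ₀ i) + Real.exp (ζ₀ * g i) * ∑ j, p i j * V' j) :=
      Finset.sum_congr rfl fun i _ => by rw [key i]
    have h2 : ∑ i, u i * (Real.exp (ζ₀ * g i) * ∑ j, p i j * V' j)
        = ρ ζ₀ * ∑ j, u j * V' j := by
      calc ∑ i, u i * (Real.exp (ζ₀ * g i) * ∑ j, p i j * V' j)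
          = ∑ i, ∑ j, u i * (Real.exp (ζ₀ * g i) * p i j) * V' j := by
            apply Finset.sum_congr rfl; intro i _
            rw [Finset.mul_sum, Finset.mul_sum]
            apply Finset.sum_congr rfl; intro j _; ring
        _ = ∑ j, ∑ i, u i * (Real.exp (ζ₀ * g i) * p i j) * V' j :=
            Finset.sum_comm
        _ = ∑ j, (∑ i, u i * (Real.exp (ζ₀ * g i) * p i j)) * V' j := by
            apply Finset.sum_congr rfl; intro j _; rw [Finset.sum_mul]
        _ = ∑ j, ρ ζ₀ * u j * V' j := by
            apply Finset.sum_congr rfl; intro j _; rw [hleft j]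
        _ = ρ ζ₀ * ∑ j, u j * V' j := by
            rw [Finset.mul_sum]; apply Finset.sum_congr rfl; intro j _; ring
    calc ρ' * ∑ i, u i * V ζ₀ i + ρ ζ₀ * ∑ i, u i * V' i
        = ∑ i, u i * (ρ' * V ζ₀ i + ρ ζ₀ * V' i) := by
          rw [Finset.mul_sum, Finset.mul_sum, ← Finset.sum_add_distrib]
          apply Finset.sum_congr rfl; intro i _; ring
      _ = ∑ i, (u i * (g i * (ρ ζ₀ * V ζ₀ i))
          + u i * (Real.exp (ζ₀ * g i) * ∑ j, p i j * V' j)) := by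
          rw [h1]; apply Finset.sum_congr rfl; intro i _; ring
      _ = ∑ i, u i * (g i * (ρ ζ₀ * V ζ₀ i))
          + ∑ i, u i * (Real.exp (ζ₀ * g i) * ∑ j, p i j * V' j) :=
          Finset.sum_add_distrib
      _ = ρ ζ₀ * (∑ i, u i * V ζ₀ i * g i) + ρ ζ₀ * ∑ i, u i * V' i := by
          rw [h2]
          congr 1
          rw [Finset.mul_sum]
          apply Finset.sum_congr rfl; intro i _; ring
  have hmain : ρ' * ∑ i, u i * V ζ₀ i = ρ ζ₀ * ∑ i, u i * V ζ₀ i * g i := by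
    linarith [hsum]
  have hA : 0 < ∑ i, u i * V ζ₀ i :=
    Finset.sum_pos (fun i _ => mul_pos (hu i) (hV ζ₀ hmem i)) Finset.univ_nonempty
  have hρ0 : 0 < ρ ζ₀ := hρ ζ₀ hmem
  have hrhs : ∑ i, (u i * V ζ₀ i / ∑ j, u j * V ζ₀ j) * g i
      = (∑ i, u i * V ζ₀ i * g i) / ∑ j, u j * V ζ₀ j := by
    rw [Finset.sum_div]
    apply Finset.sum_congr rfl; intro i _; ring
  rw [hrhs]
  field_simp
  linarith [hmain]
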